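/- arXiv:2108.03628 — 11 statements merged into one kernel-verified Lean document; each statement's English description precedes it below -/
import Mathlib

section
/- For every integer k ≥ 1, L_{4k+1} - 1 = 5 * F_{2k} * F_{2k+1}. -/
def lucas : ℕ → ℕ
  | 0 => 2
  | 1 => 1
  | n + 2 => lucas (n + 1) + lucas n

lemma lucas_fib : ∀ n, lucas (n + 1) = Nat.fib n + Nat.fib (n + 2)
  | 0 => by decide
  | 1 => by decide
  | n + 2 => by
    rw [show n + 2 + 1 = (n + 1) + 1 + 1 from rfl, lucas, lucas_fib (n + 1), lucas_fib n,
      Nat.fib_add_two (n := n + 2), Nat.fib_add_two (n := n)]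
    ring

lemma catalan_even (k : ℕ) :
    (Nat.fib (2 * k + 1) : ℤ) ^ 2 =
      (Nat.fib (2 * k) : ℤ) ^ 2 + Nat.fib (2 * k) * Nat.fib (2 * k + 1) + 1 := by
  induction k with
  | zero => decide
  | succ n ih =>
    have h1 : 2 * (n + 1) = 2 * n + 1 + 1 := by ring
    rw [h1, Nat.fib_add_two (n := 2 * n + 1), Nat.fib_add_two (n := 2 * n)]
    push_cast
    nlinarith [ih]

theorem lucas_shift_2 (k : ℕ) (hk : 1 ≤ k) :
    lucas (4 * k + 1) - 1 = 5 * Nat.fib (2 * k) * Nat.fib (2 * k + 1) := by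
  have h := lucas_fib (4 * k)
  have h40 : 4 * k = 2 * (2 * k) := by ring
  have h42 : 4 * k + 2 = 2 * (2 * k) + 2 := by ring
  have hc := catalan_even k
  have hfa := Nat.fib_two_mul (2 * k)
  have hfb := Nat.fib_two_mul_add_two (n := 2 * k)
  -- abbreviations
  set a := Nat.fib (2 * k) with ha
  set b := Nat.fib (2 * k + 1) with hb
  have hab : a ≤ b := Nat.fib_le_fib_succ
  have hfa' : Nat.fib (4 * k) = a * (2 * b - a) := by rw [h40]; exact hfa
  have hfb' : Nat.fib (4 * k + 2) = b * (2 * a + b) := by rw [h42]; exact hfb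
  have key : Nat.fib (4 * k) + Nat.fib (4 * k + 2) = 5 * a * b + 1 := by
    have : ((Nat.fib (4 * k) : ℤ)) + Nat.fib (4 * k + 2) = 5 * a * b + 1 := by
      rw [hfa', hfb']
      push_cast [Nat.sub_add_cancel, hab]
      have h2b : (a : ℤ) ≤ 2 * b := by
        have := (Nat.cast_le (α := ℤ)).2 hab; linarith
      rw [Int.ofNat_sub (by omega : a ≤ 2 * b)]
      push_cast
      nlinarith [hc]
    exact_mod_cast this
  rw [h, key]
  omega
end

section
/- For every integer k ≥ 1, L_{4k+1} + 1 = L_{2k} * L_{2k+1}. -/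
lemma lucas_catalan (n : ℕ) :
    (lucas n : ℤ) * lucas (n + 2) - (lucas (n + 1))^2 = 5 * (-1)^n := by
  induction n with
  | zero => simp [lucas]
  | succ m ih =>
    have h3 : lucas (m + 3) = lucas (m + 2) + lucas (m + 1) := rfl
    have h2 : lucas (m + 2) = lucas (m + 1) + lucas m := rfl
    have : (lucas (m + 3) : ℤ) = lucas (m + 2) + lucas (m + 1) := by
      rw [h3]; push_cast; ring
    have h2' : (lucas (m + 2) : ℤ) = lucas (m + 1) + lucas m := by
      rw [h2]; push_cast; ring
    show (lucas (m+1) : ℤ) * lucas (m + 3) - (lucas (m + 2))^2 = 5 * (-1)^(m+1)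
    rw [this, h2']
    rw [h2'] at ih
    linear_combination -ih

lemma lucas_double (n : ℕ) :
    (lucas (2 * n) : ℤ) = (lucas n)^2 - 2 * (-1)^n ∧
    (lucas (2 * n + 1) : ℤ) = lucas n * lucas (n + 1) - (-1)^n := by
  induction n with
  | zero => simp [lucas]
  | succ m ih =>
    obtain ⟨hA, hB⟩ := ih
    have hc := lucas_catalan m
    have e1 : 2 * (m + 1) = 2 * m + 1 + 1 := by ring
    have e2 : 2 * (m + 1) + 1 = 2 * m + 1 + 2 := by ring
    have r1 : (lucas (2 * m + 2) : ℤ) = lucas (2 * m + 1) + lucas (2 * m) := by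
      show ((lucas (2*m+1) + lucas (2*m) : ℕ) : ℤ) = _; push_cast; ring
    have r2 : (lucas (2 * m + 3) : ℤ) = lucas (2 * m + 2) + lucas (2 * m + 1) := by
      show ((lucas (2*m+2) + lucas (2*m+1) : ℕ) : ℤ) = _; push_cast; ring
    have rn : (lucas (m + 2) : ℤ) = lucas (m + 1) + lucas m := by
      show ((lucas (m+1) + lucas m : ℕ) : ℤ) = _; push_cast; ring
    constructor
    · show (lucas (2*(m+1)) : ℤ) = _
      rw [show 2*(m+1) = 2*m+2 by ring, r1, hA, hB]
      rw [rn] at hc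
      linear_combination hc
    · show (lucas (2*(m+1)+1) : ℤ) = _
      rw [show 2*(m+1)+1 = 2*m+3 by ring, r2, r1, hA, hB, rn]
      rw [rn] at hc
      linear_combination hc

theorem lucas_shift_3 (k : ℕ) (hk : 1 ≤ k) :
    lucas (4 * k + 1) + 1 = lucas (2 * k) * lucas (2 * k + 1) := by
  have h := (lucas_double (2 * k)).2
  rw [show 2 * (2 * k) = 4 * k by ring] at h
  have hsign : ((-1 : ℤ))^(2 * k) = 1 := by
    rw [pow_mul]; norm_num
  rw [hsign] at h
  have : (lucas (4 * k + 1) : ℤ) + 1 = lucas (2 * k) * lucas (2 * k + 1) := by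
    rw [h]; ring
  exact_mod_cast this
end

section
/- For every integer k ≥ 1, L_{4k+3} - 1 = L_{2k+1} * L_{2k+2}. -/
def L (n : ℕ) : ℤ := lucas n

lemma L_rec (n : ℕ) : L (n + 2) = L (n + 1) + L n := by
  simp [L, show lucas (n+2) = lucas (n+1) + lucas n from rfl]

lemma L_catalan (n : ℕ) : L (n+1) ^ 2 - L n * L (n+2) = 5 * (-1 : ℤ) ^ (n+1) := by
  induction n with
  | zero => simp [L, lucas]
  | succ m ih =>
    have h1 := L_rec m
    have h2 := L_rec (m+1)
    rw [h2, h1]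
    rw [h1] at ih
    have : (-1 : ℤ) ^ (m + 1 + 1) = -(-1 : ℤ) ^ (m+1) := by ring
    rw [this]
    nlinarith [ih]

lemma L_main (n : ℕ) :
    L n * L (n+1) = L (2*n+1) + (-1 : ℤ) ^ n ∧
    L n ^ 2 = L (2*n) + 2 * (-1 : ℤ) ^ n := by
  induction n with
  | zero => constructor <;> simp [L, lucas]
  | succ m ih =>
    obtain ⟨hA, hB⟩ := ih
    have hC := L_catalan m
    have e1 : 2 * (m+1) = 2*m + 2 := by ring
    have e2 : 2 * (m+1) + 1 = 2*m + 3 := by ring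
    have r1 := L_rec (2*m)
    have r2 := L_rec (2*m+1)
    have r3 := L_rec m
    have hsgn : (-1 : ℤ) ^ (m + 1) = -(-1 : ℤ) ^ m := by ring
    have hC' : L (m+1) ^ 2 = L m * L (m+1) + L m ^ 2 - 5 * (-1 : ℤ) ^ m := by
      rw [r3, hsgn] at hC; ring_nf at hC ⊢; linarith
    constructor
    · rw [e2, show 2*m+3 = (2*m+1)+2 from by ring, L_rec (2*m+1), r1, r3, hsgn]
      linear_combination hC' + 2*hA + hB
    · rw [e1, r1, hsgn]
      linear_combination hC' + hA + hB

lemma lucas_pos : ∀ n, 0 < lucas n := by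
  have h : ∀ n, 0 < lucas n ∧ 0 < lucas (n+1) := by
    intro n
    induction n with
    | zero => exact ⟨by norm_num [lucas], by norm_num [lucas]⟩
    | succ m ih =>
      refine ⟨ih.2, ?_⟩
      have : lucas (m+1+1) = lucas (m+1) + lucas m := rfl
      omega
  exact fun n => (h n).1

theorem lucas_shift_6 (k : ℕ) (hk : 1 ≤ k) :
    lucas (4 * k + 3) - 1 = lucas (2 * k + 1) * lucas (2 * k + 2) := by
  have h := (L_main (2*k+1)).1
  have hsgn : (-1 : ℤ) ^ (2*k+1) = -1 := by
    rw [pow_succ, pow_mul]; norm_num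
  rw [hsgn] at h
  have e : 2 * (2*k+1) + 1 = 4*k+3 := by ring
  rw [e, show 2*k+1+1 = 2*k+2 from rfl] at h
  have hp := lucas_pos (4*k+3)
  simp only [L] at h
  have : (lucas (2*k+1) * lucas (2*k+2) : ℤ) = (lucas (4*k+3) : ℤ) - 1 := by
    push_cast at h ⊢; linarith
  omega
end

section
/- For every integer k ≥ 1, L_{4k+3} + 1 = 5 * F_{2k+1} * F_{2k+2}. -/
lemma lucas_eq_fib (n : ℕ) : lucas (n + 1) = Nat.fib n + Nat.fib (n + 2) := by
  induction n using Nat.twoStepInduction with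
  | zero => simp [lucas]
  | one => simp [lucas, Nat.fib_add_two]
  | more n ih1 ih2 =>
    show lucas (n + 3) = _
    have h3 : lucas (n + 3) = lucas (n + 2) + lucas (n + 1) := rfl
    have e0 : lucas (n + 1 + 1) = lucas (n + 2) := rfl
    have e1 : Nat.fib (n + 1 + 1) = Nat.fib (n + 2) := rfl
    have e2 : Nat.fib (n + 1 + 2) = Nat.fib (n + 3) := rfl
    have e3 : Nat.fib (n + 2 + 2) = Nat.fib (n + 4) := rfl
    have f1 : Nat.fib (n + 3) = Nat.fib (n + 1) + Nat.fib (n + 2) :=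
      Nat.fib_add_two (n := n + 1)
    have f2 : Nat.fib (n + 4) = Nat.fib (n + 2) + Nat.fib (n + 3) :=
      Nat.fib_add_two (n := n + 2)
    rw [e0, e2] at ih2
    have f0 : Nat.fib (n + 2) = Nat.fib n + Nat.fib (n + 1) := Nat.fib_add_two
    rw [h3, ih1, ih2, e3, f2, f1]
    omega

lemma cassiniZ (n : ℕ) : (Nat.fib (n + 1) : ℤ) ^ 2 - Nat.fib n * Nat.fib (n + 2) = (-1) ^ n := by
  induction n with
  | zero => simp
  | succ n ih =>
    have h2 : (Nat.fib (n + 2) : ℤ) = Nat.fib n + Nat.fib (n + 1) := by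
      rw [Nat.fib_add_two]; push_cast; ring
    have h3 : (Nat.fib (n + 3) : ℤ) = Nat.fib (n + 1) + (Nat.fib n + Nat.fib (n + 1)) := by
      rw [Nat.fib_add_two (n := n + 1), Nat.fib_add_two]; push_cast; ring
    rw [h2] at ih
    rw [show n + 1 + 1 = n + 2 from rfl, show n + 1 + 2 = n + 3 from rfl, h2, h3, pow_succ]
    linear_combination (-1 : ℤ) * ih

lemma cassini (k : ℕ) : Nat.fib (2 * k + 1) * Nat.fib (2 * k + 3) =
    Nat.fib (2 * k + 2) ^ 2 + 1 := by
  have h := cassiniZ (2 * k + 1)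
  have e : (-1 : ℤ) ^ (2 * k + 1) = -1 := by
    rw [pow_succ, pow_mul]; norm_num
  rw [e] at h
  have e2 : 2 * k + 1 + 1 = 2 * k + 2 := rfl
  have e3 : 2 * k + 1 + 2 = 2 * k + 3 := rfl
  rw [e2, e3] at h
  have : (Nat.fib (2 * k + 1) * Nat.fib (2 * k + 3) : ℤ) = (Nat.fib (2 * k + 2) ^ 2 + 1 : ℤ) := by
    linarith
  exact_mod_cast this

theorem lucas_shift_7 (k : ℕ) (hk : 1 ≤ k) :
    lucas (4 * k + 3) + 1 = 5 * Nat.fib (2 * k + 1) * Nat.fib (2 * k + 2) := by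
  have hl : lucas (4 * k + 3) = Nat.fib (4 * k + 2) + Nat.fib (4 * k + 4) :=
    lucas_eq_fib (4 * k + 2)
  have h1 : Nat.fib (4 * k + 2) = Nat.fib (2 * k) * Nat.fib (2 * k + 1) +
      Nat.fib (2 * k + 1) * Nat.fib (2 * k + 2) := by
    have := Nat.fib_add (2 * k) (2 * k + 1)
    convert this using 2 <;> ring
  have h2 : Nat.fib (4 * k + 4) = Nat.fib (2 * k + 1) * Nat.fib (2 * k + 2) +
      Nat.fib (2 * k + 2) * Nat.fib (2 * k + 3) := by
    have := Nat.fib_add (2 * k + 1) (2 * k + 2)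
    convert this using 2 <;> ring
  have hc := cassini k
  have h3 : Nat.fib (2 * k + 2) = Nat.fib (2 * k) + Nat.fib (2 * k + 1) :=
    Nat.fib_add_two
  have h4 : Nat.fib (2 * k + 3) = Nat.fib (2 * k + 1) + Nat.fib (2 * k + 2) :=
    Nat.fib_add_two
  rw [hl, h1, h2]
  nlinarith [hc, h3, h4]
end

section
/- For all positive integers a, n and every prime p not dividing a, D_{ap}(n) = D_a(pn) \ D_a(n), where D_a(n) := {d ∈ ℕ_{>0} : d ∣ a·n and gcd(a·n / d, a) = 1}. -/
def Dset (a n : ℕ) : Set ℕ := {d | 0 < d ∧ d ∣ a * n ∧ Nat.gcd (a * n / d) a = 1}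

theorem Dset_mul_prime (a n p : ℕ) (ha : 0 < a) (hn : 0 < n) (hp : p.Prime)
    (hpa : ¬ p ∣ a) : Dset (a * p) n = Dset a (p * n) \ Dset a n := by
  have hmul : a * (p * n) = a * p * n := by ring
  ext d
  simp only [Dset, Set.mem_setOf_eq, Set.mem_diff]
  constructor
  · rintro ⟨hd, hdvd, hg⟩
    have hdvd' : d ∣ a * (p * n) := by rwa [hmul]
    have hk : a * (p * n) / d = a * p * n / d := by rw [hmul]
    refine ⟨⟨hd, hdvd', by rw [hk]; exact Nat.Coprime.coprime_dvd_right (dvd_mul_right a p) hg⟩, ?_⟩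
    rintro ⟨-, hdan, -⟩
    have hpd : p ∣ a * p * n / d := by
      have h1 : a * p * n / d = p * (a * n / d) := by
        rw [mul_comm a p, mul_assoc, Nat.mul_div_assoc p hdan]
      rw [h1]; exact dvd_mul_right _ _
    have : p ∣ 1 := hg ▸ Nat.dvd_gcd hpd (Dvd.dvd.mul_right (dvd_refl p) a |>.trans (by rw [mul_comm]))
    have h1 := Nat.le_of_dvd one_pos this
    have h2 := hp.two_le
    omega
  · rintro ⟨⟨hd, hdvd, hg⟩, hnot⟩
    set k := a * (p * n) / d with hkdef
    have heq : d * k = a * (p * n) := Nat.mul_div_cancel' hdvd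
    by_cases hpk : p ∣ k
    · exfalso
      obtain ⟨k', hk'⟩ := hpk
      have han : a * n = d * k' := by
        have : (a * n) * p = (d * k') * p := by
          have := heq
          rw [hk'] at this
          nlinarith [this]
        exact Nat.eq_of_mul_eq_mul_right hp.pos this
      have hdan : d ∣ a * n := ⟨k', han⟩
      refine hnot ⟨hd, hdan, ?_⟩
      have hank : a * n / d = k' := by rw [han, Nat.mul_div_cancel_left _ hd]
      rw [hank]
      exact Nat.Coprime.coprime_dvd_left ⟨p, by rw [hk', mul_comm]⟩ hg
    · refine ⟨hd, by rwa [hmul] at hdvd, ?_⟩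
      have hk2 : a * p * n / d = k := by rw [hkdef, hmul]
      rw [hk2]
      exact Nat.Coprime.mul_right hg ((hp.coprime_iff_not_dvd.mpr hpk).symm)
end

section
/- For every positive integer n, the Lucas number L_n equals the product of Φ_d over all d in D_2(n) := {d ∈ ℕ_{>0} : d ∣ 2n, gcd(2n/d, 2) = 1}, where Φ_d is the d-th homogeneous cyclotomic factor Φ_d = ∏_{1 ≤ k ≤ d, gcd(k,d)=1} (α − e^{2πik/d} β), α = (1+√5)/2, β = (1−√5)/2, and Φ_1 := 1. -/
open Finset

noncomputable def goldenA : ℂ := (1 + Real.sqrt 5) / 2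

noncomputable def goldenB : ℂ := (1 - Real.sqrt 5) / 2

noncomputable def goldPhi (n : ℕ) : ℂ :=
  if n = 1 then 1 else
    ∏ k ∈ (Finset.Icc 1 n).filter (fun k => Nat.gcd n k = 1),
      (goldenA - Complex.exp (2 * Real.pi * Complex.I * k / n) * goldenB)

private lemma sqrt5_sq : ((Real.sqrt 5 : ℝ) : ℂ) ^ 2 = 5 := by
  rw [← Complex.ofReal_pow, Real.sq_sqrt (by norm_num : (0:ℝ) ≤ 5)]
  norm_num

private lemma goldenB_ne : goldenB ≠ 0 := by
  unfold goldenB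
  intro h
  rw [div_eq_zero_iff] at h
  rcases h with h | h
  · have h1 : ((Real.sqrt 5 : ℝ) : ℂ) = 1 := by linear_combination -h
    have h2 := sqrt5_sq
    rw [h1] at h2; norm_num at h2
  · norm_num at h

private lemma goldenAaddB : goldenA + goldenB = 1 := by
  unfold goldenA goldenB; ring

private lemma goldenA_sq : goldenA ^ 2 = goldenA + 1 := by
  unfold goldenA
  linear_combination sqrt5_sq / 4

private lemma goldenB_sq : goldenB ^ 2 = goldenB + 1 := by
  unfold goldenB
  linear_combination sqrt5_sq / 4

private lemma lucas_complex (n : ℕ) : (lucas n : ℂ) = goldenA ^ n + goldenB ^ n := by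
  induction n using Nat.strong_induction_on with
  | _ n ih =>
    match n with
    | 0 => simp [lucas]; norm_num
    | 1 => simp [lucas, goldenAaddB]
    | (m + 2) =>
      have h1 := ih (m + 1) (by omega)
      have h2 := ih m (by omega)
      show ((lucas (m+1) + lucas m : ℕ) : ℂ) = _
      push_cast [h1, h2]
      have hA : goldenA ^ (m + 2) = goldenA ^ (m+1) + goldenA ^ m := by
        have : goldenA ^ (m + 2) = goldenA ^ m * goldenA ^ 2 := by ring
        rw [this, goldenA_sq]; ring
      have hB : goldenB ^ (m + 2) = goldenB ^ (m+1) + goldenB ^ m := by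
        have : goldenB ^ (m + 2) = goldenB ^ m * goldenB ^ 2 := by ring
        rw [this, goldenB_sq]; ring
      rw [hA, hB]; ring

open Polynomial in
private lemma goldPhi_eq_cyclotomic (d : ℕ) (hd : 2 ≤ d) :
    goldPhi d = goldenB ^ d.totient * (cyclotomic d ℂ).eval (goldenA / goldenB) := by
  have hd0 : d ≠ 0 := by omega
  have hdpos : 0 < d := by omega
  set ζ : ℂ := Complex.exp (2 * Real.pi * Complex.I / d) with hζdef
  have hζ : IsPrimitiveRoot ζ d := Complex.isPrimitiveRoot_exp d hd0
  have : NeZero d := ⟨hd0⟩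
  rw [goldPhi, if_neg (by omega), cyclotomic_eq_prod_X_sub_primitiveRoots hζ, eval_prod]
  simp only [eval_sub, eval_X, eval_C]
  rw [← hζ.card_primitiveRoots, ← Finset.prod_const, ← Finset.prod_mul_distrib]
  refine Finset.prod_bij (fun k _ => ζ ^ k) ?_ ?_ ?_ ?_
  · intro k hk
    simp only [Finset.mem_filter, Finset.mem_Icc] at hk
    rw [mem_primitiveRoots hdpos]
    exact hζ.pow_of_coprime k (Nat.coprime_comm.mp hk.2)
  · intro k hk j hj H
    simp only [Finset.mem_filter, Finset.mem_Icc] at hk hj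
    have hkd : k ≠ d := by rintro rfl; rw [Nat.gcd_self] at hk; omega
    have hjd : j ≠ d := by rintro rfl; rw [Nat.gcd_self] at hj; omega
    exact hζ.pow_inj (by omega) (by omega) H
  · intro ξ hξ
    rw [mem_primitiveRoots hdpos] at hξ
    obtain ⟨i, hik, hic, hiξ⟩ := hζ.isPrimitiveRoot_iff.mp hξ
    have hi1 : 1 ≤ i := by
      rcases Nat.eq_zero_or_pos i with rfl | h
      · exfalso
        rw [Nat.coprime_zero_left] at hic; omega
      · exact h
    exact ⟨i, Finset.mem_filter.mpr ⟨Finset.mem_Icc.mpr ⟨hi1, by omega⟩,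
      Nat.coprime_comm.mp hic⟩, hiξ⟩
  · intro k hk
    have hexp : Complex.exp (2 * Real.pi * Complex.I * k / d) = ζ ^ k := by
      rw [hζdef, ← Complex.exp_nat_mul]
      congr 1
      ring
    rw [hexp]
    field_simp [goldenB_ne]

open Polynomial in
private lemma prod_goldPhi_divisors (n : ℕ) (hn : 0 < n) :
    (goldenA - goldenB) * ∏ d ∈ n.divisors, goldPhi d = goldenA ^ n - goldenB ^ n := by
  have h1 : (1 : ℕ) ∈ n.divisors := Nat.one_mem_divisors.mpr hn.ne'
  set g : ℕ → ℂ := fun d => goldenB ^ d.totient * (cyclotomic d ℂ).eval (goldenA / goldenB)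
    with hg
  have hone : goldenA - goldenB = g 1 := by
    rw [hg]
    simp only [cyclotomic_one, eval_sub, eval_X, eval_one, Nat.totient_one, pow_one]
    field_simp [goldenB_ne]
  have hkey : ∏ d ∈ n.divisors, g d = goldenB ^ n * ((goldenA / goldenB) ^ n - 1) := by
    rw [hg]
    rw [Finset.prod_mul_distrib, Finset.prod_pow_eq_pow_sum, Nat.sum_totient, ← eval_prod,
      prod_cyclotomic_eq_X_pow_sub_one hn, eval_sub, eval_pow, eval_X, eval_one]
  have hstep : ∀ d ∈ n.divisors.erase 1, goldPhi d = g d := by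
    intro d hd
    rw [Finset.mem_erase, Nat.mem_divisors] at hd
    have hd2 : 2 ≤ d := by
      have := Nat.pos_of_mem_divisors (Nat.mem_divisors.mpr hd.2)
      omega
    exact goldPhi_eq_cyclotomic d hd2
  rw [← Finset.mul_prod_erase _ _ h1, goldPhi, if_pos rfl, one_mul,
    Finset.prod_congr rfl hstep, hone, Finset.mul_prod_erase _ _ h1, hkey]
  have hBn : goldenB ^ n ≠ 0 := pow_ne_zero _ goldenB_ne
  field_simp [goldenB_ne]
  rw [div_pow, mul_sub, mul_one, mul_div_cancel₀ _ hBn]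

private lemma pow_sub_pow_ne (n : ℕ) (hn : 0 < n) : goldenA ^ n - goldenB ^ n ≠ 0 := by
  set a : ℝ := (1 + Real.sqrt 5) / 2 with ha
  set b : ℝ := (1 - Real.sqrt 5) / 2 with hb
  have hA : goldenA = (a : ℂ) := by unfold goldenA; norm_cast
  have hB : goldenB = (b : ℂ) := by unfold goldenB; norm_cast
  rw [hA, hB]
  have : goldenA ^ n - goldenB ^ n = ((a ^ n - b ^ n : ℝ) : ℂ) := by
    rw [hA, hB]; push_cast; ring
  rw [← Complex.ofReal_pow, ← Complex.ofReal_pow, ← Complex.ofReal_sub,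
    Complex.ofReal_ne_zero]
  have hs : Real.sqrt 5 ^ 2 = 5 := Real.sq_sqrt (by norm_num)
  have hs0 : 0 ≤ Real.sqrt 5 := Real.sqrt_nonneg 5
  have ha1 : 1 < a := by rw [ha]; nlinarith
  have hb1 : |b| < 1 := by rw [abs_lt]; constructor <;> [rw [hb]; rw [hb]] <;> nlinarith
  have h1 : b ^ n ≤ |b| ^ n := by
    calc b ^ n ≤ |b ^ n| := le_abs_self _
    _ = |b| ^ n := abs_pow b n
  have h2 : |b| ^ n < 1 := pow_lt_one₀ (abs_nonneg b) hb1 hn.ne'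
  have h3 : 1 < a ^ n := one_lt_pow₀ ha1 hn.ne'
  intro hcon
  nlinarith

theorem lucas_eq_prod_goldPhi (n : ℕ) (hn : 0 < n) :
    (lucas n : ℂ) =
      ∏ d ∈ (Finset.Icc 1 (2 * n)).filter
          (fun d => d ∣ 2 * n ∧ Nat.gcd (2 * n / d) 2 = 1), goldPhi d := by
  have h2n : 0 < 2 * n := by omega
  have hdvd_even : ∀ d : ℕ, d ∣ n → 0 < d → Nat.gcd (2 * n / d) 2 ≠ 1 := by
    intro d hd hdpos
    obtain ⟨m, rfl⟩ := hd
    have : 2 * (d * m) / d = 2 * m := by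
      rw [Nat.mul_div_assoc _ (Dvd.intro m rfl)]
      rw [Nat.mul_div_cancel_left _ hdpos]
    rw [this]
    intro hc
    have : Odd (2 * m) := Nat.coprime_two_right.mp hc
    rw [Nat.odd_iff] at this
    omega
  have hset : (Finset.Icc 1 (2*n)).filter
      (fun d => d ∣ 2 * n ∧ Nat.gcd (2 * n / d) 2 = 1) = (2*n).divisors \ n.divisors := by
    ext d
    simp only [Finset.mem_filter, Finset.mem_Icc, Finset.mem_sdiff, Nat.mem_divisors]
    constructor
    · rintro ⟨⟨hd1, hd2⟩, hdvd, hgcd⟩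
      refine ⟨⟨hdvd, by omega⟩, ?_⟩
      rintro ⟨hdn, -⟩
      exact hdvd_even d hdn (by omega) hgcd
    · rintro ⟨⟨hdvd, -⟩, hnd⟩
      have hdpos : 0 < d := by
        rcases Nat.eq_zero_or_pos d with rfl | h
        · exfalso; rw [Nat.zero_dvd] at hdvd; omega
        · exact h
      refine ⟨⟨hdpos, Nat.le_of_dvd h2n hdvd⟩, hdvd, ?_⟩
      obtain ⟨q, hq⟩ := hdvd
      have hq' : 2 * n / d = q := by rw [hq, Nat.mul_div_cancel_left _ hdpos]
      rw [hq']
      rcases Nat.even_or_odd q with he | ho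
      · exfalso
        obtain ⟨r, hr⟩ := he
        apply hnd
        have h2 : 2 * n = 2 * (d * r) := by rw [hq, hr]; ring
        exact ⟨⟨r, by omega⟩, by omega⟩
      · exact ho.coprime_two_right
  rw [hset]
  have hsub : n.divisors ⊆ (2*n).divisors :=
    Nat.divisors_subset_of_dvd h2n.ne' ⟨2, by ring⟩
  have hsplit := Finset.prod_sdiff hsub (f := goldPhi)
  have e1 := prod_goldPhi_divisors n hn
  have e2 := prod_goldPhi_divisors (2*n) h2n
  have hne := pow_sub_pow_ne n hn
  apply mul_right_cancel₀ hne
  rw [lucas_complex]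
  have hlhs : (goldenA ^ n + goldenB ^ n) * (goldenA ^ n - goldenB ^ n)
      = goldenA ^ (2*n) - goldenB ^ (2*n) := by
    rw [two_mul, pow_add, pow_add]; ring
  rw [hlhs, ← e2, ← hsplit, ← e1]
  ring
end

section
/- For every positive integer n, F_{3n}/F_n = ∏_{d ∈ D_3(n)} Φ_d, where D_3(n) := {d ∈ ℕ_{>0} : d ∣ 3n, gcd(3n/d, 3) = 1} and Φ_d are the homogeneous cyclotomic factors associated with the golden ratio. -/
open Finset

open Polynomial in
lemma prod_primitiveRoots_goldPhi (d : ℕ) (hd : 1 ≤ d) :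
    ∏ ζ ∈ primitiveRoots d ℂ, (goldenA - ζ * goldenB)
      = if d = 1 then goldenA - goldenB else goldPhi d := by
  rcases eq_or_lt_of_le hd with h1 | h2
  · rw [← h1, if_pos rfl, IsPrimitiveRoot.primitiveRoots_one, Finset.prod_singleton, one_mul]
  · have hd2 : 2 ≤ d := h2
    set μ := Complex.exp (2 * Real.pi * Complex.I / d) with hμ
    have hprim : IsPrimitiveRoot μ d := Complex.isPrimitiveRoot_exp d (by omega)
    set S := (Finset.Icc 1 d).filter (fun k => Nat.gcd d k = 1) with hS
    have hSlt : ∀ k ∈ S, k < d := by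
      intro k hk
      rw [hS, mem_filter, mem_Icc] at hk
      rcases eq_or_lt_of_le hk.1.2 with h | h
      · exfalso; rw [h, Nat.gcd_self] at hk; omega
      · exact h
    have hinj : ∀ a ∈ S, ∀ b ∈ S, μ ^ a = μ ^ b → a = b := by
      intro a ha b hb hab
      exact hprim.pow_inj (hSlt a ha) (hSlt b hb) hab
    have himage : S.image (fun k => μ ^ k) = primitiveRoots d ℂ := by
      apply Finset.eq_of_subset_of_card_le
      · intro x hx
        obtain ⟨k, hk, rfl⟩ := Finset.mem_image.1 hx
        rw [mem_primitiveRoots (by omega : 0 < d)]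
        exact hprim.pow_of_coprime k
          (Nat.coprime_comm.mp ((mem_filter.1 hk).2))
      · rw [hprim.card_primitiveRoots, Finset.card_image_of_injOn hinj]
        have hSeq : S = (Finset.range d).filter (fun k => Nat.gcd d k = 1) := by
          ext k
          simp only [hS, mem_filter, mem_Icc, mem_range]
          constructor
          · rintro ⟨⟨hk1, hk2⟩, hg⟩
            refine ⟨?_, hg⟩
            rcases eq_or_lt_of_le hk2 with h | h
            · exfalso; rw [h, Nat.gcd_self] at hg; omega
            · exact h
          · rintro ⟨hk1, hg⟩
            refine ⟨⟨?_, hk1.le⟩, hg⟩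
            rcases Nat.eq_zero_or_pos k with rfl | h
            · rw [Nat.gcd_zero_right] at hg; omega
            · exact h
        rw [hSeq]
        have : d.totient = #((Finset.range d).filter (fun k => Nat.gcd d k = 1)) := rfl
        omega
    rw [← himage, Finset.prod_image hinj, if_neg (by omega), goldPhi, if_neg (by omega)]
    apply Finset.prod_congr rfl
    intro k hk
    have : μ ^ k = Complex.exp (2 * Real.pi * Complex.I * k / d) := by
      rw [hμ, ← Complex.exp_nat_mul]
      congr 1
      ring
    rw [this]

lemma goldenA_sub_goldenB : goldenA - goldenB = (Real.sqrt 5 : ℂ) := by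
  rw [goldenA, goldenB]; ring

lemma goldenA_sub_goldenB_ne_zero : goldenA - goldenB ≠ 0 := by
  rw [goldenA_sub_goldenB]
  exact_mod_cast Real.sqrt_ne_zero'.2 (by norm_num)

open Polynomial in
lemma fib_eq_prod_goldPhi (n : ℕ) (hn : 0 < n) :
    (Nat.fib n : ℂ) = ∏ d ∈ n.divisors, goldPhi d := by
  have hprim : IsPrimitiveRoot (Complex.exp (2 * Real.pi * Complex.I / n)) n :=
    Complex.isPrimitiveRoot_exp n hn.ne'
  have hdisj : (↑n.divisors : Set ℕ).PairwiseDisjoint fun k => primitiveRoots k ℂ :=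
    fun a _ b _ hab => IsPrimitiveRoot.disjoint hab
  have hfact : goldenA ^ n - goldenB ^ n
      = ∏ ζ ∈ nthRootsFinset n (1 : ℂ), (goldenA - ζ * goldenB) :=
    IsPrimitiveRoot.pow_sub_pow_eq_prod_sub_mul goldenA goldenB hn hprim
  rw [IsPrimitiveRoot.nthRoots_one_eq_biUnion_primitiveRoots, Finset.prod_biUnion hdisj] at hfact
  have hfact2 : goldenA ^ n - goldenB ^ n
      = (goldenA - goldenB) * ∏ d ∈ n.divisors, goldPhi d := by
    rw [hfact]
    have : ∀ d ∈ n.divisors,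
        ∏ ζ ∈ primitiveRoots d ℂ, (goldenA - ζ * goldenB)
          = (if d = 1 then goldenA - goldenB else 1) * goldPhi d := by
      intro d hd
      rw [prod_primitiveRoots_goldPhi d (Nat.pos_of_mem_divisors hd)]
      by_cases h : d = 1
      · subst h; rw [if_pos rfl, if_pos rfl, goldPhi, if_pos rfl, mul_one]
      · rw [if_neg h, if_neg h, one_mul]
    rw [Finset.prod_congr rfl this, Finset.prod_mul_distrib]
    congr 1
    rw [Finset.prod_ite_eq' n.divisors 1 (fun _ => goldenA - goldenB),
      if_pos (Nat.one_mem_divisors.2 hn.ne')]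
  -- Binet
  have hbinet : (Nat.fib n : ℂ) * (goldenA - goldenB) = goldenA ^ n - goldenB ^ n := by
    have hr : (Nat.fib n : ℝ) * Real.sqrt 5 = Real.goldenRatio ^ n - Real.goldenConj ^ n := by
      rw [Real.coe_fib_eq]
      have h5 : Real.sqrt 5 ≠ 0 := Real.sqrt_ne_zero'.2 (by norm_num)
      field_simp
    have hc := congrArg (Complex.ofReal) hr
    push_cast at hc
    rw [goldenA_sub_goldenB, goldenA, goldenB]
    push_cast
    convert hc using 2 <;> push_cast <;> ring
  have := hbinet.trans hfact2
  rw [mul_comm] at this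
  exact mul_left_cancel₀ goldenA_sub_goldenB_ne_zero this

theorem fib_ratio_eq_prod_goldPhi (n : ℕ) (hn : 0 < n) :
    (Nat.fib (3 * n) : ℂ) / (Nat.fib n : ℂ) =
      ∏ d ∈ (Finset.Icc 1 (3 * n)).filter
          (fun d => d ∣ 3 * n ∧ Nat.gcd (3 * n / d) 3 = 1), goldPhi d := by
  have h3n : 0 < 3 * n := by omega
  have hset : (Finset.Icc 1 (3 * n)).filter
      (fun d => d ∣ 3 * n ∧ Nat.gcd (3 * n / d) 3 = 1)
      = (3 * n).divisors \ n.divisors := by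
    ext d
    simp only [mem_filter, mem_Icc, Nat.mem_divisors, mem_sdiff]
    constructor
    · rintro ⟨⟨h1, h2⟩, hdvd, hg⟩
      refine ⟨⟨hdvd, by omega⟩, ?_⟩
      rintro ⟨hdn, -⟩
      have hdiv : 3 * n / d = 3 * (n / d) := Nat.mul_div_assoc 3 hdn
      rw [hdiv] at hg
      have : Nat.gcd (3 * (n / d)) 3 = 3 := Nat.gcd_eq_right (dvd_mul_right 3 _)
      omega
    · rintro ⟨⟨hdvd, -⟩, hnd⟩
      have hd0 : 0 < d := Nat.pos_of_dvd_of_pos hdvd h3n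
      refine ⟨⟨hd0, Nat.le_of_dvd h3n hdvd⟩, hdvd, ?_⟩
      rw [Nat.gcd_comm]
      refine (Nat.Prime.coprime_iff_not_dvd (by norm_num)).2 ?_
      rintro ⟨m, hm⟩
      refine hnd ⟨⟨m, ?_⟩, by omega⟩
      obtain ⟨q, hq⟩ := hdvd
      have hqd : 3 * n / d = q := by rw [hq, Nat.mul_div_cancel_left _ hd0]
      rw [hqd] at hm
      have h3 : 3 * n = 3 * (d * m) := by rw [hq, hm]; ring
      exact Nat.eq_of_mul_eq_mul_left (by norm_num) h3
  rw [hset]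
  have hsub : n.divisors ⊆ (3 * n).divisors :=
    Nat.divisors_subset_of_dvd h3n.ne' (dvd_mul_left n 3)
  rw [fib_eq_prod_goldPhi (3 * n) h3n, fib_eq_prod_goldPhi n hn,
    ← Finset.prod_sdiff hsub]
  have hne : (∏ d ∈ n.divisors, goldPhi d) ≠ 0 := by
    rw [← fib_eq_prod_goldPhi n hn]
    exact_mod_cast (Nat.fib_pos.2 hn).ne'
  rw [mul_div_assoc, div_self hne, mul_one]
end

section
/- Let a, b, d be positive integers with a ≠ b. Then H_a(d) ∩ H_b(d) = ∅, where H_a(d) := {h ∈ ℕ_{>0} : d ∣ a·h and gcd(a·h/d, a) = 1}. -/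
def Hset (a d : ℕ) : Set ℕ := {h | 0 < h ∧ d ∣ a * h ∧ Nat.gcd (a * h / d) a = 1}

lemma Hset_key (a d h : ℕ) (ha : 0 < a) (hh : 0 < h) (hd : 0 < d)
    (hdvd : d ∣ a * h) (hcop : Nat.gcd (a * h / d) a = 1) {p : ℕ} (pp : p.Prime)
    (hpa : p ∣ a) :
    d.factorization p = a.factorization p + h.factorization p := by
  set m := a * h / d with hm
  have hEq : d * m = a * h := Nat.mul_div_cancel' hdvd
  have hm0 : m ≠ 0 := by
    intro h0
    rw [h0, mul_zero] at hEq
    exact (Nat.mul_pos ha hh).ne' hEq.symm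
  have hpm : ¬ p ∣ m := by
    intro hdm
    have : p ∣ Nat.gcd m a := Nat.dvd_gcd hdm hpa
    rw [hcop] at this
    exact (Nat.Prime.not_dvd_one pp) this
  have hfm : m.factorization p = 0 := Nat.factorization_eq_zero_of_not_dvd hpm
  have h1 : (d * m).factorization p = (a * h).factorization p := by rw [hEq]
  rw [Nat.factorization_mul hd.ne' hm0, Nat.factorization_mul ha.ne' hh.ne'] at h1
  simp only [Finsupp.add_apply] at h1
  omega

lemma Hset_key2 (a d h : ℕ) (ha : 0 < a) (hh : 0 < h) (hd : 0 < d)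
    (hdvd : d ∣ a * h) {p : ℕ} (hpa : ¬ p ∣ a) :
    d.factorization p ≤ h.factorization p := by
  have hle : d.factorization p ≤ (a * h).factorization p :=
    (Nat.factorization_le_iff_dvd hd.ne' (Nat.mul_pos ha hh).ne').mpr hdvd p
  rw [Nat.factorization_mul ha.ne' hh.ne'] at hle
  simp only [Finsupp.add_apply] at hle
  have hfa : a.factorization p = 0 := Nat.factorization_eq_zero_of_not_dvd hpa
  omega

theorem Hset_disjoint (a b d : ℕ) (ha : 0 < a) (hb : 0 < b) (hd : 0 < d)
    (hab : a ≠ b) : Hset a d ∩ Hset b d = ∅ := by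
  ext h
  simp only [Set.mem_inter_iff, Set.mem_empty_iff_false, iff_false]
  rintro ⟨⟨hh, hda, hca⟩, ⟨-, hdb, hcb⟩⟩
  apply hab
  apply Nat.eq_of_factorization_eq ha.ne' hb.ne'
  intro p
  by_cases pp : p.Prime
  · by_cases hpa : p ∣ a <;> by_cases hpb : p ∣ b
    · have k1 := Hset_key a d h ha hh hd hda hca pp hpa
      have k2 := Hset_key b d h hb hh hd hdb hcb pp hpb
      omega
    · have k1 := Hset_key a d h ha hh hd hda hca pp hpa
      have k2 := Hset_key2 b d h hb hh hd hdb hpb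
      have : 0 < a.factorization p := pp.factorization_pos_of_dvd ha.ne' hpa
      omega
    · have k1 := Hset_key b d h hb hh hd hdb hcb pp hpb
      have k2 := Hset_key2 a d h ha hh hd hda hpa
      have : 0 < b.factorization p := pp.factorization_pos_of_dvd hb.ne' hpb
      omega
    · rw [Nat.factorization_eq_zero_of_not_dvd hpa,
        Nat.factorization_eq_zero_of_not_dvd hpb]
  · rw [Nat.factorization_eq_zero_of_not_prime a pp,
      Nat.factorization_eq_zero_of_not_prime b pp]
end

section
/- Let a, r, m be positive integers and x > 1. Let T_{a,r,m} be the set of t ∈ {1,…,m} for which there exists u ≥ 1 with t·u ≡ r (mod m) and gcd(a,u)=1, and for t ∈ T_{a,r,m} let u_{a,r,m}(t) be the least such u. Then ⋃_{n ≤ x, n ≡ r (mod m)} D_a(n) = ⋃_{t ∈ T_{a,r,m}} {d ≤ a·x/u_{a,r,m}(t) : d ≡ a·t (mod a·m)}, where D_a(n) := {d : d ∣ a·n, gcd(a·n/d, a) = 1}. -/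
theorem union_Dset_eq (a r m : ℕ) (ha : 0 < a) (hr : 0 < r) (hm : 0 < m)
    (x : ℝ) (hx : 1 < x) :
    (⋃ n ∈ {n : ℕ | 0 < n ∧ (n : ℝ) ≤ x ∧ n % m = r % m}, Dset a n) =
      ⋃ t ∈ {t : ℕ | 1 ≤ t ∧ t ≤ m ∧ ∃ u, 0 < u ∧ t * u % m = r % m ∧ Nat.gcd a u = 1},
        {d : ℕ | 0 < d ∧
          (d : ℝ) ≤ (a : ℝ) * x / (sInf {u | 0 < u ∧ t * u % m = r % m ∧ Nat.gcd a u = 1} : ℕ) ∧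
          d % (a * m) = a * t % (a * m)} := by
  ext d
  simp only [Set.mem_iUnion, Set.mem_setOf_eq, Dset]
  constructor
  · rintro ⟨n, ⟨hn0, hnx, hnr⟩, hd0, hdvd, hgcd⟩
    set u := a * n / d with hu_def
    have hdu : d * u = a * n := Nat.mul_div_cancel' hdvd
    have hadvd : a ∣ d := by
      have h1 : a ∣ d * u := hdu ▸ dvd_mul_right a n
      exact (Nat.Coprime.dvd_of_dvd_mul_right (Nat.coprime_comm.mp hgcd)) h1
    obtain ⟨t', hdt'⟩ := hadvd
    have ht'0 : 0 < t' := by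
      rcases Nat.eq_zero_or_pos t' with h | h
      · subst h; simp at hdt'; omega
      · exact h
    have hnt' : n = t' * u := by
      have h3 : a * (t' * u) = a * n := by rw [← mul_assoc, ← hdt', hdu]
      exact (Nat.eq_of_mul_eq_mul_left ha h3).symm
    have hu0' : 0 < u := Nat.pos_of_ne_zero fun h => by
      rw [h, mul_zero] at hnt'; omega
    obtain ⟨t, ht1, htm, htt'⟩ : ∃ t, 1 ≤ t ∧ t ≤ m ∧ t % m = t' % m := by
      rcases Nat.eq_zero_or_pos (t' % m) with h | h
      · exact ⟨m, hm, le_refl m, by rw [Nat.mod_self, h]⟩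
      · exact ⟨t' % m, h, le_of_lt (Nat.mod_lt _ hm),
          Nat.mod_mod_of_dvd t' dvd_rfl⟩
    have htu : t * u % m = r % m := by
      rw [hnt'] at hnr
      rw [Nat.mul_mod, htt', ← Nat.mul_mod, hnr]
    have hgau : Nat.gcd a u = 1 := Nat.gcd_comm a u ▸ hgcd
    refine ⟨t, ⟨ht1, htm, u, hu0', htu, hgau⟩, hd0, ?_, ?_⟩
    · set u0 := sInf {u | 0 < u ∧ t * u % m = r % m ∧ Nat.gcd a u = 1} with hu0def
      have hmem : u0 ∈ {u | 0 < u ∧ t * u % m = r % m ∧ Nat.gcd a u = 1} :=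
        Nat.sInf_mem ⟨u, hu0', htu, hgau⟩
      have hu0pos : 0 < u0 := hmem.1
      have hle : u0 ≤ u := Nat.sInf_le ⟨hu0', htu, hgau⟩
      rw [le_div_iff₀ (by exact_mod_cast hu0pos)]
      have h1 : (d : ℝ) * u0 ≤ (d : ℝ) * u := by
        apply mul_le_mul_of_nonneg_left (by exact_mod_cast hle) (by positivity)
      have h2 : (d : ℝ) * u = (a : ℝ) * n := by exact_mod_cast congrArg Nat.cast hdu
      have h3 : (a : ℝ) * n ≤ a * x :=
        mul_le_mul_of_nonneg_left hnx (by positivity)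
      linarith
    · rw [hdt', Nat.mul_mod_mul_left, Nat.mul_mod_mul_left, htt']
  · rintro ⟨t, ⟨ht1, htm, u, hu0', htu, hgau⟩, hd0, hdle, hdmod⟩
    set u0 := sInf {u | 0 < u ∧ t * u % m = r % m ∧ Nat.gcd a u = 1} with hu0def
    have hmem : u0 ∈ {u | 0 < u ∧ t * u % m = r % m ∧ Nat.gcd a u = 1} :=
      Nat.sInf_mem ⟨u, hu0', htu, hgau⟩
    obtain ⟨hu0pos, htu0, hgau0⟩ := hmem
    have hamod : d % (a * m) = a * (t % m) := by rw [hdmod, Nat.mul_mod_mul_left]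
    have hadvd : a ∣ d := by
      have h2 : a ∣ d % (a * m) := hamod ▸ dvd_mul_right a (t % m)
      have h3 : a ∣ a * m * (d / (a * m)) := (dvd_mul_right a m).mul_right _
      exact (Nat.div_add_mod d (a * m)) ▸ Nat.dvd_add h3 h2
    obtain ⟨t', hdt'⟩ := hadvd
    have ht'0 : 0 < t' := by
      rcases Nat.eq_zero_or_pos t' with h | h
      · subst h; simp at hdt'; omega
      · exact h
    have htt' : t' % m = t % m := by
      have h1 : a * (t' % m) = a * (t % m) := by
        rw [← Nat.mul_mod_mul_left, ← hdt', hamod]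
      exact Nat.eq_of_mul_eq_mul_left ha h1
    refine ⟨t' * u0, ⟨Nat.mul_pos ht'0 hu0pos, ?_, ?_⟩, hd0, ?_, ?_⟩
    · -- (t'*u0 : ℝ) ≤ x
      have hdu0 : (d : ℝ) * u0 ≤ a * x := by
        rw [le_div_iff₀ (by exact_mod_cast hu0pos)] at hdle
        exact hdle
      have ha' : (0 : ℝ) < a := by exact_mod_cast ha
      have hdr : (d : ℝ) = (a : ℝ) * t' := by exact_mod_cast hdt'
      have heq : (a : ℝ) * ((t' : ℝ) * u0) = (d : ℝ) * u0 := by rw [hdr]; ring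
      have h5 : (a : ℝ) * ((t' : ℝ) * u0) ≤ a * x := heq ▸ hdu0
      have h6 := (mul_le_mul_iff_right₀ ha').mp h5
      push_cast
      exact h6
    · rw [Nat.mul_mod, htt', ← Nat.mul_mod, htu0]
    · exact ⟨u0, by rw [hdt']; ring⟩
    · have h1 : a * (t' * u0) / d = u0 := by
        have h2 : a * (t' * u0) = d * u0 := by rw [hdt']; ring
        rw [h2, Nat.mul_div_cancel_left _ hd0]
      rw [h1, Nat.gcd_comm]; exact hgau0
end

section
/- There is a constant C such that for all integers n ≥ 1, |log Φ_n − φ(n)·log α| ≤ C, where Φ_n is the n-th homogeneous cyclotomic factor at the golden ratio, φ is Euler's totient function, and α = (1+√5)/2. -/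
open Finset Polynomial

noncomputable def zR : ℝ := (1 - Real.sqrt 5) / (1 + Real.sqrt 5)

lemma sqrt5_bounds' : 2 ≤ Real.sqrt 5 ∧ Real.sqrt 5 ≤ 3 := by
  constructor
  · nlinarith [Real.sq_sqrt (by norm_num : (5:ℝ) ≥ 0), Real.sqrt_nonneg 5]
  · nlinarith [Real.sq_sqrt (by norm_num : (5:ℝ) ≥ 0), Real.sqrt_nonneg 5]

lemma goldenA_eq : goldenA = ((( 1 + Real.sqrt 5) / 2 : ℝ) : ℂ) := by
  rw [goldenA]; push_cast; ring

lemma goldenB_eq : goldenB = ((( 1 - Real.sqrt 5) / 2 : ℝ) : ℂ) := by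
  rw [goldenB]; push_cast; ring

lemma goldenA_ne_zero : goldenA ≠ 0 := by
  rw [goldenA_eq]
  obtain ⟨h2, _⟩ := sqrt5_bounds'
  exact_mod_cast ne_of_gt (by linarith : (0:ℝ) < (1 + Real.sqrt 5)/2)

lemma zC_eq : goldenB / goldenA = ((zR : ℝ) : ℂ) := by
  rw [goldenA_eq, goldenB_eq, zR]
  obtain ⟨h2, _⟩ := sqrt5_bounds'
  have h1 : ((1:ℝ) + Real.sqrt 5) ≠ 0 := by linarith
  push_cast
  field_simp

lemma goldPhi_abs (n : ℕ) (hn : 2 ≤ n) :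
    ‖goldPhi n‖ =
      ((1 + Real.sqrt 5)/2) ^ n.totient * |eval zR (cyclotomic n ℝ)| := by
  have hn0 : n ≠ 0 := by omega
  have hnpos : 0 < n := by omega
  haveI : NeZero n := ⟨hn0⟩
  have hζ : IsPrimitiveRoot (Complex.exp (2 * Real.pi * Complex.I / n)) n :=
    Complex.isPrimitiveRoot_exp n hn0
  set ζ : ℂ := Complex.exp (2 * Real.pi * Complex.I / n) with hζdef
  -- rewrite goldPhi
  rw [goldPhi, if_neg (by omega)]
  -- index set change
  have hset : (Finset.Icc 1 n).filter (fun k => Nat.gcd n k = 1)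
      = (Finset.range n).filter (fun k => Nat.gcd n k = 1) := by
    ext k
    simp only [Finset.mem_filter, Finset.mem_Icc, Finset.mem_range]
    constructor
    · rintro ⟨⟨h1, h2⟩, h3⟩
      refine ⟨?_, h3⟩
      rcases eq_or_lt_of_le h2 with rfl | h
      · rw [Nat.gcd_self] at h3; omega
      · exact h
    · rintro ⟨h1, h3⟩
      refine ⟨⟨?_, by omega⟩, h3⟩
      rcases Nat.eq_zero_or_pos k with rfl | h
      · rw [Nat.gcd_zero_right] at h3; omega
      · exact h
  rw [hset]
  -- exp rewrite
  have hexp : ∀ k : ℕ, Complex.exp (2 * Real.pi * Complex.I * k / n) = ζ ^ k := by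
    intro k
    rw [hζdef, ← Complex.exp_nat_mul]
    ring_nf
  -- product over primitive roots
  have hprod : ∏ k ∈ (Finset.range n).filter (fun k => Nat.gcd n k = 1),
      (goldenA - Complex.exp (2 * Real.pi * Complex.I * k / n) * goldenB)
      = ∏ ξ ∈ primitiveRoots n ℂ, (goldenA - ξ * goldenB) := by
    apply Finset.prod_nbij (fun k => ζ ^ k)
    · intro k hk
      rw [Finset.mem_filter, Finset.mem_range] at hk
      rw [mem_primitiveRoots hnpos]
      exact (hζ.pow_iff_coprime hnpos k).mpr (Nat.coprime_comm.mp hk.2)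
    · intro a ha b hb hab
      simp only [Finset.coe_filter, Set.mem_setOf_eq, Finset.mem_range] at ha hb
      exact hζ.pow_inj ha.1 hb.1 hab
    · intro ξ hξ
      rw [Finset.mem_coe, mem_primitiveRoots hnpos] at hξ
      obtain ⟨i, hi, hie⟩ := hζ.eq_pow_of_pow_eq_one hξ.pow_eq_one
      refine ⟨i, ?_, hie⟩
      simp only [Finset.coe_filter, Set.mem_setOf_eq, Finset.mem_range]
      refine ⟨hi, ?_⟩
      have : IsPrimitiveRoot (ζ ^ i) n := hie ▸ hξ
      exact Nat.coprime_comm.mp ((hζ.pow_iff_coprime hnpos i).mp this)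
    · intro k _
      rw [hexp k]
  rw [hprod]
  -- factor out goldenA
  have hfac : ∀ ξ : ℂ, goldenA - ξ * goldenB = goldenA * (1 - ξ * (goldenB / goldenA)) := by
    intro ξ
    field_simp [goldenA_ne_zero]
  have : ∏ ξ ∈ primitiveRoots n ℂ, (goldenA - ξ * goldenB)
      = goldenA ^ n.totient * ∏ ξ ∈ primitiveRoots n ℂ, (1 - ξ * (goldenB / goldenA)) := by
    rw [← hζ.card_primitiveRoots, ← Finset.prod_const, ← Finset.prod_mul_distrib]
    exact Finset.prod_congr rfl fun ξ _ => hfac ξ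
  rw [this, norm_mul, norm_pow]
  -- abs of goldenA
  have hA : ‖goldenA‖ = (1 + Real.sqrt 5)/2 := by
    rw [goldenA_eq, Complex.norm_real, Real.norm_eq_abs, abs_of_pos]
    obtain ⟨h2, _⟩ := sqrt5_bounds'
    linarith
  rw [hA]
  congr 1
  -- abs of the product equals |eval zR cyclotomic|
  rw [norm_prod]
  have hpt : ∀ ξ ∈ primitiveRoots n ℂ, ‖1 - ξ * (goldenB / goldenA)‖
      = ‖((zR : ℝ) : ℂ) - ξ‖ := by
    intro ξ hξ
    rw [mem_primitiveRoots hnpos] at hξ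
    have habs1 : ‖ξ‖ = 1 := Complex.norm_eq_one_of_pow_eq_one hξ.pow_eq_one hn0
    have hξne : ξ ≠ 0 := by
      intro h; rw [h] at habs1; simp at habs1
    rw [zC_eq]
    have key : (1 : ℂ) - ξ * (zR : ℂ) = ξ * ((ξ⁻¹ : ℂ) - (zR : ℂ)) := by
      field_simp
    rw [key, norm_mul, habs1, one_mul]
    have hinv : (ξ⁻¹ : ℂ) = starRingEnd ℂ ξ := Complex.inv_eq_conj habs1
    rw [hinv]
    have : (starRingEnd ℂ) ξ - (zR : ℂ) = (starRingEnd ℂ) (ξ - (zR : ℂ)) := by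
      rw [map_sub, Complex.conj_ofReal]
    rw [this, Complex.norm_conj]
    exact norm_sub_rev ξ _
  rw [Finset.prod_congr rfl hpt, ← norm_prod]
  have hcyc : ∏ ξ ∈ primitiveRoots n ℂ, (((zR : ℝ) : ℂ) - ξ)
      = eval ((zR : ℝ) : ℂ) (cyclotomic n ℂ) := by
    rw [cyclotomic_eq_prod_X_sub_primitiveRoots hζ, eval_prod]
    simp
  rw [hcyc, show ((zR : ℝ) : ℂ) = Complex.ofRealHom zR from rfl,
    cyclotomic.eval_apply zR n Complex.ofRealHom]
  simp [Complex.norm_real]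


lemma sqrt5_bounds : 2 ≤ Real.sqrt 5 ∧ Real.sqrt 5 ≤ 3 := by
  constructor
  · nlinarith [Real.sq_sqrt (by norm_num : (5:ℝ) ≥ 0), Real.sqrt_nonneg 5]
  · nlinarith [Real.sq_sqrt (by norm_num : (5:ℝ) ≥ 0), Real.sqrt_nonneg 5]

lemma abs_zR_le : |zR| ≤ 1/2 := by
  obtain ⟨h2, h3⟩ := sqrt5_bounds
  rw [zR, abs_div]
  rw [div_le_iff₀ (by positivity)]
  rw [abs_of_nonpos (by linarith), abs_of_pos (by linarith)]
  nlinarith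

lemma abs_zR_pow_le (d : ℕ) (hd : 1 ≤ d) : |zR ^ d| ≤ (1/2) ^ d ∧ ((1:ℝ)/2) ^ d ≤ 1/2 := by
  constructor
  · rw [abs_pow]
    exact pow_le_pow_left₀ (abs_nonneg _) abs_zR_le d
  · have := pow_le_pow_of_le_one (by norm_num : (0:ℝ) ≤ 1/2) (by norm_num) hd
    simpa using this

lemma log_bound (d : ℕ) (hd : 1 ≤ d) : abs (Real.log (abs (zR ^ d - 1))) ≤ 2 * (1/2) ^ d := by
  obtain ⟨h1, h2⟩ := abs_zR_pow_le d hd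
  have ht : |zR ^ d| ≤ 1/2 := h1.trans h2
  set u : ℝ := abs (zR ^ d - 1) with hu
  have hul : 1 - |zR ^ d| ≤ u := by
    have := abs_sub_abs_le_abs_sub (1:ℝ) (zR ^ d)
    rw [abs_one] at this
    rw [hu, abs_sub_comm]
    linarith
  have huu : u ≤ 1 + |zR ^ d| := by
    have := abs_sub (zR ^ d) 1
    calc u ≤ |zR ^ d| + |(1:ℝ)| := abs_sub _ _
      _ = 1 + |zR ^ d| := by rw [abs_one]; ring
  have hupos : (0:ℝ) < u := by linarith
  have hlog1 : Real.log u ≤ |zR ^ d| := by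
    have := Real.log_le_sub_one_of_pos hupos
    linarith
  have hlog2 : -Real.log u ≤ 2 * |zR ^ d| := by
    rw [← Real.log_inv]
    have hinvpos : (0:ℝ) < u⁻¹ := by positivity
    have := Real.log_le_sub_one_of_pos hinvpos
    have h3 : u⁻¹ - 1 = (1 - u) / u := by field_simp
    have h4 : (1 - u) / u ≤ 2 * |zR ^ d| := by
      rw [div_le_iff₀ hupos]
      nlinarith [abs_nonneg (zR ^ d)]
    linarith
  rw [abs_le]
  constructor
  · nlinarith
  · nlinarith

lemma cyclo_ne_zero (d : ℕ) (hd : 1 ≤ d) : eval zR (cyclotomic d ℝ) ≠ 0 := by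
  intro h
  have hdvd : cyclotomic d ℝ ∣ X ^ d - 1 := cyclotomic.dvd_X_pow_sub_one d ℝ
  have : eval zR (cyclotomic d ℝ) ∣ eval zR (X ^ d - 1) := eval_dvd hdvd
  rw [h] at this
  have h0 : eval zR ((X:ℝ[X]) ^ d - 1) = zR ^ d - 1 := by simp
  have := zero_dvd_iff.mp this
  rw [h0] at this
  obtain ⟨h1, h2⟩ := abs_zR_pow_le d hd
  have hle : |zR ^ d| ≤ 1/2 := h1.trans h2
  have heq : zR ^ d = 1 := by linarith [sub_eq_zero.mp this]
  rw [heq] at hle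
  simp at hle
  linarith

open ArithmeticFunction in
lemma key1 : ∀ n : ℕ, 0 < n →
    ∑ d ∈ n.divisors, Real.log (abs (eval zR (cyclotomic d ℝ))) = Real.log (abs (zR ^ n - 1)) := by
  intro n hn
  have hprod : ∏ d ∈ n.divisors, cyclotomic d ℝ = X ^ n - 1 :=
    prod_cyclotomic_eq_X_pow_sub_one hn ℝ
  have h1 : ∏ d ∈ n.divisors, eval zR (cyclotomic d ℝ) = zR ^ n - 1 := by
    rw [← eval_prod, hprod]; simp
  rw [← h1, Finset.abs_prod, Real.log_prod]
  intro d hd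
  exact abs_ne_zero.mpr (cyclo_ne_zero d (Nat.pos_of_mem_divisors hd))

open ArithmeticFunction ArithmeticFunction.Moebius in
lemma key2 (n : ℕ) (hn : 0 < n) :
    Real.log (abs (eval zR (cyclotomic n ℝ))) =
    ∑ x ∈ n.divisorsAntidiagonal, (μ x.1) • Real.log (abs (zR ^ x.2 - 1)) :=
  (ArithmeticFunction.sum_eq_iff_sum_smul_moebius_eq.mp key1 n hn).symm

lemma geom_Icc_eq (n : ℕ) : ∑ d ∈ Finset.Icc 1 n, ((1:ℝ)/2) ^ d = 1 - (1/2) ^ n := by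
  induction n with
  | zero => simp
  | succ n ih =>
    rw [Finset.sum_Icc_succ_top (Nat.le_add_left 1 n), ih, pow_succ]
    ring

lemma geom_Icc (n : ℕ) : ∑ d ∈ Finset.Icc 1 n, ((1:ℝ)/2) ^ d ≤ 1 := by
  rw [geom_Icc_eq]
  nlinarith [pow_nonneg (by norm_num : (0:ℝ) ≤ 1/2) n]

open ArithmeticFunction ArithmeticFunction.Moebius in
lemma logP_bound (n : ℕ) (hn : 0 < n) :
    abs (Real.log (abs (eval zR (cyclotomic n ℝ)))) ≤ 2 := by
  rw [key2 n hn]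
  have step1 : abs (∑ x ∈ n.divisorsAntidiagonal, (μ x.1) • Real.log (abs (zR ^ x.2 - 1)))
      ≤ ∑ x ∈ n.divisorsAntidiagonal, 2 * ((1:ℝ)/2) ^ x.2 := by
    refine (Finset.abs_sum_le_sum_abs _ _).trans (Finset.sum_le_sum ?_)
    intro x hx
    have hx2 : 0 < x.2 := Nat.pos_of_mem_divisors (Nat.snd_mem_divisors_of_mem_antidiagonal hx)
    rw [zsmul_eq_mul, abs_mul]
    have h1 : |((μ x.1 : ℤ) : ℝ)| ≤ 1 := by
      rw [← Int.cast_abs]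
      exact_mod_cast abs_moebius_le_one
    have h2 := log_bound x.2 hx2
    have h3 : (0:ℝ) ≤ abs (Real.log (abs (zR ^ x.2 - 1))) := abs_nonneg _
    nlinarith
  have step2 : ∑ x ∈ n.divisorsAntidiagonal, 2 * ((1:ℝ)/2) ^ x.2
      = ∑ d ∈ n.divisors, 2 * ((1:ℝ)/2) ^ d := by
    rw [← Nat.map_div_left_divisors, Finset.sum_map]
    rfl
  have step3 : ∑ d ∈ n.divisors, 2 * ((1:ℝ)/2) ^ d ≤ ∑ d ∈ Finset.Icc 1 n, 2 * ((1:ℝ)/2) ^ d := by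
    apply Finset.sum_le_sum_of_subset_of_nonneg
    · intro d hd
      rw [Finset.mem_Icc]
      exact ⟨Nat.pos_of_mem_divisors hd, Nat.le_of_dvd hn (Nat.mem_divisors.mp hd).1⟩
    · intro i _ _; positivity
  have step4 : ∑ d ∈ Finset.Icc 1 n, 2 * ((1:ℝ)/2) ^ d ≤ 2 := by
    rw [← Finset.mul_sum]
    nlinarith [geom_Icc n]
  linarith


theorem log_goldPhi :
    ∃ C : ℝ, ∀ n : ℕ, 1 ≤ n →
      |Real.log ‖goldPhi n‖ -
        (Nat.totient n : ℝ) * Real.log ((1 + Real.sqrt 5) / 2)| ≤ C := by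
  refine ⟨2, fun n hn => ?_⟩
  obtain ⟨h2, h3⟩ := sqrt5_bounds'
  rcases eq_or_lt_of_le hn with rfl | hn2
  · -- n = 1
    rw [goldPhi, if_pos rfl]
    simp only [norm_one, Real.log_one, Nat.totient_one, Nat.cast_one, one_mul, zero_sub, abs_neg]
    have hpos : (0:ℝ) < (1 + Real.sqrt 5)/2 := by linarith
    have h1 : Real.log ((1 + Real.sqrt 5)/2) ≤ (1 + Real.sqrt 5)/2 - 1 :=
      Real.log_le_sub_one_of_pos hpos
    have h0 : 0 ≤ Real.log ((1 + Real.sqrt 5)/2) :=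
      Real.log_nonneg (by linarith)
    rw [abs_of_nonneg h0]
    linarith
  · -- n ≥ 2
    have hn2' : 2 ≤ n := hn2
    have hnpos : 0 < n := by omega
    rw [goldPhi_abs n hn2']
    have hPne : |eval zR (cyclotomic n ℝ)| ≠ 0 := abs_ne_zero.mpr (cyclo_ne_zero n hnpos)
    have hApos : (0:ℝ) < (1 + Real.sqrt 5)/2 := by linarith
    rw [Real.log_mul (by positivity) hPne, Real.log_pow]
    have := logP_bound n hnpos
    have heq : (n.totient : ℝ) * Real.log ((1 + Real.sqrt 5)/2) + Real.log |eval zR (cyclotomic n ℝ)| -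
        (n.totient : ℝ) * Real.log ((1 + Real.sqrt 5)/2) = Real.log |eval zR (cyclotomic n ℝ)| := by ring
    rw [heq]
    exact this
end

section
/- Let z ∈ (0,1], w ∈ [0,1), and q ≥ 1 an integer. Then ∑_{k=1}^∞ (z^{k-1}/k²)(w^{⌊(k-1)/q⌋} − z·w^{⌊k/q⌋}) = (1 − z·w)·Li₂(z^q·w)/(q²·z·w) + ((1−z)/z)·∑_{j=1}^{q−1} z^j (1/j² + Li₂(z^q·w; j/q)/q²), where Li₂(x) := ∑_{n≥1} x^n/n² and Li₂(x; a) := ∑_{n≥1} x^n/(n+a)². -/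
noncomputable def Li2 (x : ℝ) : ℝ := ∑' n : ℕ, x ^ (n + 1) / ((n : ℝ) + 1) ^ 2

noncomputable def Li2s (x a : ℝ) : ℝ := ∑' n : ℕ, x ^ (n + 1) / ((n : ℝ) + 1 + a) ^ 2

lemma aux_summable_inv_sq : Summable (fun k : ℕ => 1 / ((k : ℝ) + 1) ^ 2) := by
  have h : Summable (fun n : ℕ => 1 / (n : ℝ) ^ 2) :=
    Real.summable_one_div_nat_pow.mpr one_lt_two
  have h2 := h.comp_injective (add_left_injective 1)
  simpa [Function.comp_def] using h2

/-- Reindex a summable series over ℕ by division with remainder. -/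
lemma aux_reindex (q : ℕ) (hq : 0 < q) (F : ℕ → ℝ) (hF : Summable F) :
    ∑' k : ℕ, F k = ∑ j ∈ Finset.range q, ∑' n : ℕ, F (n * q + j) := by
  haveI : NeZero q := ⟨hq.ne'⟩
  have he : ∑' p : ℕ × Fin q, F ((Nat.divModEquiv q).symm p) = ∑' k : ℕ, F k :=
    (Nat.divModEquiv q).symm.tsum_eq F
  have hFs : Summable (fun p : ℕ × Fin q => F ((Nat.divModEquiv q).symm p)) :=
    (Nat.divModEquiv q).symm.summable_iff.mpr hF
  rw [← he, Summable.tsum_prod' hFs (fun b => Summable.of_finite)]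
  have : ∀ n : ℕ, (∑' j : Fin q, F ((Nat.divModEquiv q).symm (n, j)))
      = ∑ j ∈ Finset.range q, F (n * q + j) := by
    intro n
    rw [tsum_fintype]
    rw [Finset.sum_range fun j => F (n * q + j)]
    rfl
  rw [tsum_congr this]
  rw [Summable.tsum_finsetSum]
  intro j hj
  exact hF.comp_injective (fun a b h => by
    have h2 : a * q = b * q := by omega
    exact Nat.eq_of_mul_eq_mul_right hq h2)

noncomputable def auxC (x : ℝ) (q j : ℕ) : ℝ := ∑' n : ℕ, x ^ n / ((n : ℝ) * q + j + 1) ^ 2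

lemma auxC_summable {x : ℝ} (hx0 : 0 ≤ x) (hx1 : x < 1) (q j : ℕ) :
    Summable (fun n : ℕ => x ^ n / ((n : ℝ) * q + j + 1) ^ 2) := by
  have hden : ∀ n : ℕ, (1 : ℝ) ≤ ((n : ℝ) * q + j + 1) := by
    intro n
    have h1 : (0:ℝ) ≤ (n : ℝ) * q := by positivity
    have h2 : (0:ℝ) ≤ (j : ℝ) := by positivity
    linarith
  apply Summable.of_nonneg_of_le (fun n => by positivity) (fun n => ?_)
    (summable_geometric_of_lt_one hx0 hx1)
  have h2 : (1:ℝ) ≤ ((n : ℝ) * q + j + 1) ^ 2 := by nlinarith [hden n]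
  calc x ^ n / ((n : ℝ) * q + j + 1) ^ 2 ≤ x ^ n / 1 := by
        apply div_le_div_of_nonneg_left (pow_nonneg hx0 n) one_pos h2
      _ = x ^ n := div_one _

lemma auxC_eq {x : ℝ} (hx0 : 0 ≤ x) (hx1 : x < 1) {q : ℕ} (hq : 0 < q) (j : ℕ) :
    auxC x q j = 1 / ((j : ℝ) + 1) ^ 2 + Li2s x (((j : ℝ) + 1) / q) / (q : ℝ) ^ 2 := by
  have hqR : (0:ℝ) < q := by exact_mod_cast hq
  rw [auxC, Summable.tsum_eq_zero_add (auxC_summable hx0 hx1 q j)]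
  congr 1
  · norm_num
  · rw [Li2s, ← tsum_div_const]
    apply tsum_congr
    intro n
    have hd : (0:ℝ) < (n : ℝ) + 1 + ((j : ℝ) + 1) / q := by positivity
    rw [div_div]
    have hqne : (q : ℝ) ≠ 0 := hqR.ne'
    congr 1
    rw [← mul_pow]
    congr 1
    push_cast
    field_simp
    ring

lemma auxC_last {x : ℝ} {q : ℕ} (hq : 0 < q) :
    (q : ℝ) ^ 2 * x * auxC x q (q - 1) = Li2 x := by
  have hqR : (0:ℝ) < q := by exact_mod_cast hq
  rw [auxC, ← tsum_mul_left, Li2]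
  apply tsum_congr
  intro n
  have hc : ((q - 1 : ℕ) : ℝ) = (q : ℝ) - 1 := by
    have : ((1:ℕ) : ℝ) ≤ (q : ℝ) := by exact_mod_cast hq
    push_cast [Nat.cast_sub hq]
    ring
  rw [hc]
  have h1 : ((n : ℝ) * q + ((q : ℝ) - 1) + 1) = ((n : ℝ) + 1) * q := by ring
  rw [h1, mul_pow]
  have hne1 : ((n : ℝ) + 1) ^ 2 ≠ 0 := by positivity
  have hne2 : ((q : ℝ)) ^ 2 ≠ 0 := by positivity
  field_simp
  ring

theorem dilog_series_identity (z w : ℝ) (q : ℕ) (hz0 : 0 < z) (hz1 : z ≤ 1)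
    (hw0 : 0 < w) (hw1 : w < 1) (hq : 1 ≤ q) :
    (∑' k : ℕ, z ^ k / ((k : ℝ) + 1) ^ 2 * (w ^ (k / q) - z * w ^ ((k + 1) / q))) =
      (1 - z * w) * Li2 (z ^ q * w) / ((q : ℝ) ^ 2 * z * w) +
        (1 - z) / z * ∑ j ∈ Finset.Ico 1 q,
          z ^ j * (1 / (j : ℝ) ^ 2 + Li2s (z ^ q * w) ((j : ℝ) / (q : ℝ)) / (q : ℝ) ^ 2) := by
  have hq0 : 0 < q := hq
  have hqR : (0:ℝ) < q := by exact_mod_cast hq0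
  set x := z ^ q * w with hxdef
  have hx0 : 0 < x := mul_pos (pow_pos hz0 q) hw0
  have hx1 : x < 1 := by
    have h1 : z ^ q ≤ 1 := pow_le_one₀ hz0.le hz1
    calc x = z ^ q * w := hxdef
      _ ≤ 1 * w := by gcongr
      _ = w := one_mul w
      _ < 1 := hw1
  have hwle : ∀ m : ℕ, w ^ m ≤ 1 := fun m => pow_le_one₀ hw0.le hw1.le
  have hzle : ∀ m : ℕ, z ^ m ≤ 1 := fun m => pow_le_one₀ hz0.le hz1
  -- summability of the two pieces
  have hT : Summable (fun k : ℕ => z ^ k / ((k : ℝ) + 1) ^ 2 * w ^ (k / q)) := by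
    apply Summable.of_nonneg_of_le (fun k => by positivity) (fun k => ?_) aux_summable_inv_sq
    calc z ^ k / ((k : ℝ) + 1) ^ 2 * w ^ (k / q)
        ≤ 1 / ((k : ℝ) + 1) ^ 2 * 1 := by
          gcongr <;> first | positivity | exact hzle k | exact hwle _
      _ = 1 / ((k : ℝ) + 1) ^ 2 := mul_one _
  have hU : Summable (fun k : ℕ => z ^ k / ((k : ℝ) + 1) ^ 2 * (z * w ^ ((k + 1) / q))) := by
    apply Summable.of_nonneg_of_le (fun k => by positivity) (fun k => ?_) aux_summable_inv_sq
    calc z ^ k / ((k : ℝ) + 1) ^ 2 * (z * w ^ ((k + 1) / q))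
        ≤ 1 / ((k : ℝ) + 1) ^ 2 * (1 * 1) := by
          gcongr <;> first | positivity | exact hzle k | exact hz1 | exact hwle _
      _ = 1 / ((k : ℝ) + 1) ^ 2 := by ring
  -- split the series
  have hsplit : (∑' k : ℕ, z ^ k / ((k : ℝ) + 1) ^ 2 * (w ^ (k / q) - z * w ^ ((k + 1) / q)))
      = (∑' k : ℕ, z ^ k / ((k : ℝ) + 1) ^ 2 * w ^ (k / q))
        - (∑' k : ℕ, z ^ k / ((k : ℝ) + 1) ^ 2 * (z * w ^ ((k + 1) / q))) := by
    rw [← Summable.tsum_sub hT hU]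
    exact tsum_congr fun k => by ring
  -- first piece
  have hTval : (∑' k : ℕ, z ^ k / ((k : ℝ) + 1) ^ 2 * w ^ (k / q))
      = ∑ j ∈ Finset.range q, z ^ j * auxC x q j := by
    rw [aux_reindex q hq0 _ hT]
    apply Finset.sum_congr rfl
    intro j hj
    have hjq : j < q := Finset.mem_range.mp hj
    rw [auxC, ← tsum_mul_left]
    apply tsum_congr
    intro n
    have h1 : (n * q + j) / q = n := by
      rw [Nat.add_comm, Nat.add_mul_div_right _ _ hq0, Nat.div_eq_of_lt hjq, Nat.zero_add]
    rw [h1, hxdef]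
    push_cast
    ring
  -- second piece
  have hUval : (∑' k : ℕ, z ^ k / ((k : ℝ) + 1) ^ 2 * (z * w ^ ((k + 1) / q)))
      = ∑ j ∈ Finset.range q, z ^ (j + 1) * w ^ ((j + 1) / q) * auxC x q j := by
    rw [aux_reindex q hq0 _ hU]
    apply Finset.sum_congr rfl
    intro j hj
    rw [auxC, ← tsum_mul_left]
    apply tsum_congr
    intro n
    have h1 : (n * q + j + 1) / q = (j + 1) / q + n := by
      rw [show n * q + j + 1 = (j + 1) + n * q by ring, Nat.add_mul_div_right _ _ hq0]
    rw [h1, hxdef, pow_add]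
    push_cast
    ring
  rw [hsplit, hTval, hUval]
  -- now split off the last term
  obtain ⟨p, rfl⟩ : ∃ p, q = p + 1 := ⟨q - 1, by omega⟩
  rw [Finset.sum_range_succ, Finset.sum_range_succ]
  have hw1' : ∀ j ∈ Finset.range p, z ^ (j + 1) * w ^ ((j + 1) / (p + 1)) * auxC x (p + 1) j
      = z ^ (j + 1) * auxC x (p + 1) j := by
    intro j hj
    have : (j + 1) / (p + 1) = 0 := Nat.div_eq_of_lt (by simpa using Finset.mem_range.mp hj)
    rw [this, pow_zero, mul_one]
  rw [Finset.sum_congr rfl hw1']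
  have hwp : (p + 1) / (p + 1) = 1 := Nat.div_self (by omega)
  rw [hwp, pow_one]
  -- last term value
  have hLi : Li2 x = ((p + 1 : ℕ) : ℝ) ^ 2 * x * auxC x (p + 1) p := by
    have := auxC_last (x := x) (q := p + 1) (by omega)
    simpa using this.symm
  have hzq : z ^ (p + 1) = z ^ p * z := by ring
  have hlast : z ^ p * auxC x (p + 1) p - z ^ (p + 1) * w * auxC x (p + 1) p
      = (1 - z * w) * Li2 x / (((p + 1 : ℕ) : ℝ) ^ 2 * z * w) := by
    rw [hLi]
    have h1 : ((p + 1 : ℕ) : ℝ) ≠ 0 := by positivity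
    rw [hxdef]
    field_simp
    ring
  -- the finite sum part
  have hsum : (∑ j ∈ Finset.range p, z ^ j * auxC x (p + 1) j)
        - (∑ j ∈ Finset.range p, z ^ (j + 1) * auxC x (p + 1) j)
      = (1 - z) / z * ∑ j ∈ Finset.Ico 1 (p + 1),
          z ^ j * (1 / (j : ℝ) ^ 2 + Li2s x ((j : ℝ) / ((p + 1 : ℕ) : ℝ)) / ((p + 1 : ℕ) : ℝ) ^ 2) := by
    rw [Finset.sum_Ico_eq_sum_range]
    simp only [Nat.add_sub_cancel]
    rw [← Finset.sum_sub_distrib, Finset.mul_sum]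
    apply Finset.sum_congr rfl
    intro i hi
    rw [auxC_eq hx0.le hx1 (by omega : 0 < p + 1) i]
    have hzne : z ≠ 0 := hz0.ne'
    push_cast
    field_simp
    ring
  calc (∑ j ∈ Finset.range p, z ^ j * auxC x (p + 1) j + z ^ p * auxC x (p + 1) p)
        - (∑ j ∈ Finset.range p, z ^ (j + 1) * auxC x (p + 1) j
            + z ^ (p + 1) * w * auxC x (p + 1) p)
      = ((∑ j ∈ Finset.range p, z ^ j * auxC x (p + 1) j)
          - (∑ j ∈ Finset.range p, z ^ (j + 1) * auxC x (p + 1) j))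
        + (z ^ p * auxC x (p + 1) p - z ^ (p + 1) * w * auxC x (p + 1) p) := by ring
    _ = (1 - z * w) * Li2 x / (((p + 1 : ℕ) : ℝ) ^ 2 * z * w)
        + (1 - z) / z * ∑ j ∈ Finset.Ico 1 (p + 1),
            z ^ j * (1 / (j : ℝ) ^ 2 + Li2s x ((j : ℝ) / ((p + 1 : ℕ) : ℝ)) / ((p + 1 : ℕ) : ℝ) ^ 2) := by
      rw [hsum, hlast]; ring
end
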